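/- arXiv:2107.06413 — 7 statements merged into one kernel-verified Lean document; each statement's English description precedes it below -/
import Mathlib

section
/- Let C be a total classifier and ⊢ its induced inference relation (which is complete and consistent). Then ⊢ is cautiously monotonic if and only if it satisfies cut. (Cautious monotonicity: D ⊢ s and D ⊢ t imply D ∪ {s} ⊢ t, for atoms s being labelled examples and t any sentence; cut: D ⊢ s and D ∪ {s} ⊢ t imply D ⊢ t.) -/
/-- A sentence is either an atom `(x,y)` (a labelled example) or its negation. -/
inductive Sent (X Y : Type*) where
  | pos (x : X) (y : Y)
  | neg (x : X) (y : Y)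

/-- The inference relation induced by a total classifier `C`. -/
def entails {X Y : Type*} (C : Set (X × Y) → X → Y) (D : Set (X × Y)) : Sent X Y → Prop
  | .pos x y => C D x = y
  | .neg x y => C D x ≠ y

/-- Cautious monotonicity: if `D ⊢ (x,y)` and `D ⊢ s`, then `D ∪ {(x,y)} ⊢ s`
(only atoms may be added to datasets). -/
def CautiouslyMonotonic {X Y : Type*} (C : Set (X × Y) → X → Y) : Prop :=
  ∀ (D : Set (X × Y)) (x : X) (y : Y) (s : Sent X Y),
    entails C D (.pos x y) → entails C D s → entails C (D ∪ {(x, y)}) s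

/-- Cut: if `D ⊢ (x,y)` and `D ∪ {(x,y)} ⊢ s`, then `D ⊢ s`. -/
def SatisfiesCut {X Y : Type*} (C : Set (X × Y) → X → Y) : Prop :=
  ∀ (D : Set (X × Y)) (x : X) (y : Y) (s : Sent X Y),
    entails C D (.pos x y) → entails C (D ∪ {(x, y)}) s → entails C D s

/-- For the inference relation induced by a total classifier,
cautious monotonicity holds iff cut holds. -/
theorem cautious_monotonicity_iff_cut {X Y : Type*} (C : Set (X × Y) → X → Y) :
    CautiouslyMonotonic C ↔ SatisfiesCut C := by
  constructor
  · intro cm D x y s hxy hs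
    have key : ∀ x' : X, C (D ∪ {(x, y)}) x' = C D x' := fun x' =>
      (cm D x y (.pos x' (C D x')) hxy rfl)
    cases s with
    | pos a b => exact (key a).symm.trans hs
    | neg a b => intro h; exact hs ((key a).trans h)
  · intro cut D x y s hxy hs
    have key : ∀ x' : X, C (D ∪ {(x, y)}) x' = C D x' := fun x' =>
      (cut D x y (.pos x' (C (D ∪ {(x, y)}) x')) hxy rfl).symm
    cases s with
    | pos a b => exact (key a).trans hs
    | neg a b => intro h; exact hs ((key a).symm.trans h)
end

section
/- (Coinciding predictions) Let D1 and D2 be two datasets and N a characterisation. Let D_i|N = { α ∈ D_i | α_C ⪯ N }. If D1|N = D2|N, then the grounded extensions of the regular AFs mined from (D1, N) and (D2, N) are equal; in particular the AACBR-predicted outcome for N is the same given D1 and D2. -/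
open Classical

/-- A case: a characterisation together with an outcome. The two possible outcomes
`Y = {δ, δ̄}` are modelled by `Bool`. -/
abbrev Case (X : Type*) := X × Bool

/-- An argument of a mined AF: either a labelled case or the (unique) new case. -/
abbrev Arg (X : Type*) := Case X ⊕ Unit

/-- Attack between labelled cases relative to the casebase-plus-default `CB`:
`a` attacks `b` iff they have different outcomes, `a` is at least as specific as `b`,
and no case in `CB` with `a`'s outcome lies strictly between them. -/
def caseAttacks {X : Type*} [PartialOrder X] (CB : Set (Case X)) (a b : Case X) : Prop :=
  a.2 ≠ b.2 ∧ b.1 ≤ a.1 ∧ ¬ ∃ g ∈ CB, g.1 < a.1 ∧ b.1 < g.1 ∧ g.2 = a.2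

/-- The attack relation of the regular AF mined from casebase-plus-default `CB` and
new case characterisation `N`: the new case attacks exactly the irrelevant cases. -/
def attack {X : Type*} [PartialOrder X] (CB : Set (Case X)) (N : X) :
    Arg X → Arg X → Prop
  | Sum.inl a, Sum.inl b => caseAttacks CB a b
  | Sum.inr _, Sum.inl b => ¬ b.1 ≤ N
  | _, Sum.inr _ => False

/-- The arguments of the AF mined from `D` (with default argument `dflt`) and a new case. -/
def minedArgs {X : Type*} (D : Set (Case X)) (dflt : Case X) : Set (Arg X) :=
  (Sum.inl '' (insert dflt D)) ∪ {Sum.inr ()}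

/-- `E` defends `a` in `(Args, att)` iff `a ∈ Args` and every attacker of `a` in `Args`
is attacked by some member of `E`. -/
def Defends {A : Type*} (Args : Set A) (att : A → A → Prop) (E : Set A) (a : A) : Prop :=
  a ∈ Args ∧ ∀ b ∈ Args, att b a → ∃ c ∈ E, att c b

/-- Approximation sequence of the grounded extension: `G 0` is the set of unattacked
arguments, `G (i+1)` the set of arguments defended by `G i`. -/
def Gseq {A : Type*} (Args : Set A) (att : A → A → Prop) : ℕ → Set A
  | 0 => {a | a ∈ Args ∧ ∀ b ∈ Args, ¬ att b a}
  | i + 1 => {a | Defends Args att (Gseq Args att i) a}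

/-- The grounded extension. -/
def grounded {A : Type*} (Args : Set A) (att : A → A → Prop) : Set A :=
  ⋃ i, Gseq Args att i

/-- Grounded extension of the regular AF mined from `D`, default `dflt`, and new case `N`. -/
def minedGrounded {X : Type*} [PartialOrder X] (D : Set (Case X)) (dflt : Case X)
    (N : X) : Set (Arg X) :=
  grounded (minedArgs D dflt) (attack (insert dflt D) N)

/-- The AACBR-predicted outcome for `N` given `D`: the default outcome iff the default
argument is in the grounded extension, the opposite outcome otherwise. -/
noncomputable def aacbrOutcome {X : Type*} [PartialOrder X] (D : Set (Case X))
    (dflt : Case X) (N : X) : Bool :=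
  if Sum.inl dflt ∈ minedGrounded D dflt N then dflt.2 else !dflt.2

/-- A casebase is coherent iff no two of its cases share a characterisation while
having different outcomes. -/
def Coherent {X : Type*} (D : Set (Case X)) : Prop :=
  ∀ a ∈ D, ∀ b ∈ D, a.1 = b.1 → a.2 = b.2

section Aux

variable {X : Type*} [PartialOrder X]

lemma not_attack_inr {CB : Set (Case X)} {N : X} (b : Arg X) :
    ¬ attack CB N b (Sum.inr ()) := by
  cases b <;> exact id

lemma inr_mem_minedArgs (D : Set (Case X)) (dflt : Case X) :
    (Sum.inr () : Arg X) ∈ minedArgs D dflt := Or.inr rfl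

lemma inr_mem_Gseq (D CB : Set (Case X)) (dflt : Case X) (N : X) (i : ℕ) :
    (Sum.inr () : Arg X) ∈ Gseq (minedArgs D dflt) (attack CB N) i := by
  cases i with
  | zero => exact ⟨inr_mem_minedArgs D dflt, fun b _ h => not_attack_inr b h⟩
  | succ i => exact ⟨inr_mem_minedArgs D dflt, fun b _ h => absurd h (not_attack_inr b)⟩

lemma noncore_not_mem_Gseq {D CB : Set (Case X)} {dflt : Case X} {N : X} {c : Case X}
    (hc : ¬ c.1 ≤ N) (i : ℕ) :
    Sum.inl c ∉ Gseq (minedArgs D dflt) (attack CB N) i := by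
  cases i with
  | zero => exact fun h => h.2 (Sum.inr ()) (inr_mem_minedArgs D dflt) hc
  | succ i =>
      intro h
      obtain ⟨x, _, hx⟩ := h.2 (Sum.inr ()) (inr_mem_minedArgs D dflt) hc
      exact not_attack_inr x hx

lemma caseAttacks_core_iff {D1 D2 : Set (Case X)} {N : X}
    (hcore : ∀ a : Case X, a.1 ≤ N → (a ∈ D1 ↔ a ∈ D2))
    {d a : Case X} (hdN : d.1 ≤ N) :
    caseAttacks D1 d a ↔ caseAttacks D2 d a := by
  unfold caseAttacks
  constructor <;>
  · rintro ⟨h1, h2, h3⟩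
    refine ⟨h1, h2, fun ⟨g, hg, hga, hbg, hgo⟩ =>
      h3 ⟨g, ?_, hga, hbg, hgo⟩⟩
    · first
      | exact (hcore g (le_of_lt (lt_of_lt_of_le hga hdN))).mpr hg
      | exact (hcore g (le_of_lt (lt_of_lt_of_le hga hdN))).mp hg

lemma mem_core_args {D : Set (Case X)} {dflt : Case X} {c : Case X}
    (h : Sum.inl c ∈ minedArgs D dflt) : c ∈ insert dflt D := by
  rcases h with ⟨x, hx, hxc⟩ | h
  · exact Sum.inl.inj hxc ▸ hx
  · simp at h

lemma Gseq_subset_of_core {D1 D2 : Set (Case X)} {dflt : Case X} {N : X}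
    (hdN : dflt.1 ≤ N)
    (hcore : ∀ a : Case X, a.1 ≤ N → (a ∈ insert dflt D1 ↔ a ∈ insert dflt D2)) :
    ∀ i, ∀ a, a ∈ Gseq (minedArgs D1 dflt) (attack (insert dflt D1) N) i →
      a ∈ Gseq (minedArgs D2 dflt) (attack (insert dflt D2) N) (i + 1) := by
  intro i
  induction i with
  | zero =>
      rintro (c | u) ha
      · -- `c` must be core, else it is attacked by the new case
        have hcN : c.1 ≤ N := by
          by_contra hcN
          exact ha.2 (Sum.inr ()) (inr_mem_minedArgs D1 dflt) hcN
        have hc2 : c ∈ insert dflt D2 := (hcore c hcN).mp (mem_core_args ha.1)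
        refine ⟨Or.inl ⟨c, hc2, rfl⟩, ?_⟩
        rintro (d | u) hb hatt
        · by_cases hdN' : d.1 ≤ N
          · -- core attacker would already attack in AF1: contradiction
            exfalso
            have hd1 : d ∈ insert dflt D1 := (hcore d hdN').mpr (mem_core_args hb)
            exact ha.2 (Sum.inl d) (Or.inl ⟨d, hd1, rfl⟩)
              ((caseAttacks_core_iff hcore hdN').mpr hatt)
          · exact ⟨Sum.inr (), inr_mem_Gseq D2 (insert dflt D2) dflt N 0, hdN'⟩
        · exact absurd hcN hatt
      · exact inr_mem_Gseq D2 (insert dflt D2) dflt N 1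
  | succ i ih =>
      rintro (c | u) ha
      · have hcN : c.1 ≤ N := by
          by_contra hcN
          obtain ⟨x, _, hx⟩ := ha.2 (Sum.inr ()) (inr_mem_minedArgs D1 dflt) hcN
          exact not_attack_inr x hx
        have hc2 : c ∈ insert dflt D2 := (hcore c hcN).mp (mem_core_args ha.1)
        refine ⟨Or.inl ⟨c, hc2, rfl⟩, ?_⟩
        rintro (d | u) hb hatt
        · by_cases hdN' : d.1 ≤ N
          · -- core attacker also attacks in AF1; get a defender and transfer it
            have hd1 : d ∈ insert dflt D1 := (hcore d hdN').mpr (mem_core_args hb)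
            obtain ⟨x, hx, hxatt⟩ := ha.2 (Sum.inl d) (Or.inl ⟨d, hd1, rfl⟩)
              ((caseAttacks_core_iff hcore hdN').mpr hatt)
            rcases x with e | u
            · have heN : e.1 ≤ N := by
                by_contra heN
                exact noncore_not_mem_Gseq heN i hx
              exact ⟨Sum.inl e, ih (Sum.inl e) hx,
                (caseAttacks_core_iff hcore heN).mp hxatt⟩
            · exact absurd hdN' hxatt
          · exact ⟨Sum.inr (), inr_mem_Gseq D2 (insert dflt D2) dflt N (i + 1), hdN'⟩
        · exact absurd hcN hatt
      · exact inr_mem_Gseq D2 (insert dflt D2) dflt N (i + 2)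

lemma minedGrounded_subset {D1 D2 : Set (Case X)} {dflt : Case X} {N : X}
    (hdN : dflt.1 ≤ N)
    (hcore : ∀ a : Case X, a.1 ≤ N → (a ∈ insert dflt D1 ↔ a ∈ insert dflt D2)) :
    minedGrounded D1 dflt N ⊆ minedGrounded D2 dflt N := by
  intro a ha
  obtain ⟨S, ⟨i, rfl⟩, hi⟩ := ha
  exact Set.mem_iUnion.mpr ⟨i + 1, Gseq_subset_of_core hdN hcore i a hi⟩

end Aux

/-- Coinciding predictions: if two datasets agree on their cases whose characterisations
are at most as specific as `N`, then the grounded extensions of the regular AFs mined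
from them (with new case `N`) are equal, and in particular the predicted outcomes for
`N` coincide. -/
theorem coinciding_predictions {X : Type*} [PartialOrder X]
    (D1 D2 : Set (Case X)) (h1 : D1.Finite) (h2 : D2.Finite)
    (dflt : Case X) (hd : ∀ x : X, dflt.1 ≤ x) (N : X)
    (hcore : {a ∈ D1 | a.1 ≤ N} = {a ∈ D2 | a.1 ≤ N}) :
    minedGrounded D1 dflt N = minedGrounded D2 dflt N ∧
      aacbrOutcome D1 dflt N = aacbrOutcome D2 dflt N := by
  have hcore' : ∀ a : Case X, a.1 ≤ N → (a ∈ insert dflt D1 ↔ a ∈ insert dflt D2) := by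
    intro a haN
    have := Set.ext_iff.mp hcore a
    simp only [Set.mem_setOf_eq] at this
    constructor
    · rintro (rfl | ha)
      · exact Set.mem_insert _ _
      · exact Set.mem_insert_of_mem _ (this.mp ⟨ha, haN⟩).1
    · rintro (rfl | ha)
      · exact Set.mem_insert _ _
      · exact Set.mem_insert_of_mem _ (this.mpr ⟨ha, haN⟩).1
  have hcore'' : ∀ a : Case X, a.1 ≤ N → (a ∈ insert dflt D2 ↔ a ∈ insert dflt D1) :=
    fun a haN => (hcore' a haN).symm
  have hG : minedGrounded D1 dflt N = minedGrounded D2 dflt N :=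
    Set.Subset.antisymm (minedGrounded_subset (hd N) hcore')
      (minedGrounded_subset (hd N) hcore'')
  refine ⟨hG, ?_⟩
  unfold aacbrOutcome
  rw [hG]
end

section
/- Let D be a coherent casebase, N1 a characterisation not in D, o1 an outcome. For every case θ = (θ_C, θ_o) in D such that (N1,?) defends θ in the AF mined from D and N1: if θ_o ≠ o1, then (N1,o1) attacks θ in the AF mined from D ∪ {(N1,o1)} (and any new case). -/
open Classical

/-- If `D` is coherent, `N1` does not appear in `D`, and the new case `(N1,?)` defends
a case `θ ∈ D` in the AF mined from `D` and `N1`, then, provided `θ`'s outcome differs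
from `o1`, the case `(N1, o1)` attacks `θ` in the AF mined from `D ∪ {(N1,o1)}` (and
any new case). -/
theorem defended_case_attacked_by_added_case {X : Type*} [PartialOrder X]
    (D : Set (Case X)) (hfin : D.Finite) (hcoh : Coherent D)
    (dflt : Case X) (hd : ∀ x : X, dflt.1 ≤ x)
    (N1 : X) (o1 : Bool) (hnew : ∀ a ∈ D, a.1 ≠ N1)
    (t : Case X) (ht : t ∈ D)
    (hdef : ∀ g ∈ minedArgs D dflt, attack (insert dflt D) N1 g (Sum.inl t) →
      attack (insert dflt D) N1 (Sum.inr ()) g)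
    (ho : t.2 ≠ o1) :
    caseAttacks (insert dflt (insert (N1, o1) D)) (N1, o1) t := by
  have hinr : (Sum.inr () : Arg X) ∈ minedArgs D dflt := Or.inr rfl
  have htN : t.1 ≤ N1 := by
    by_contra h
    exact hdef (Sum.inr ()) hinr h
  refine ⟨fun h => ho h.symm, htN, ?_⟩
  rintro ⟨g, hgmem, hgN, htg, hgo⟩
  -- g is not (N1,o1) since g.1 < N1
  have hgin : g ∈ insert dflt D := by
    rcases hgmem with h | h | h
    · exact Or.inl h
    · exact absurd (by rw [h]) (ne_of_lt hgN)
    · exact Or.inr h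
  -- the set of candidates
  set S : Set (Case X) := {c | c ∈ insert dflt D ∧ c.2 = o1 ∧ t.1 < c.1 ∧ c.1 ≤ g.1} with hS
  have hSfin : S.Finite := (hfin.insert dflt).subset fun c hc => hc.1
  have hSne : S.Nonempty := ⟨g, hgin, hgo, htg, le_refl _⟩
  obtain ⟨m, hmS, hmmin⟩ : ∃ m ∈ S, ∀ c ∈ S, c.1 ≤ m.1 → m.1 = c.1 := by
    obtain ⟨m, hmS, hmmin⟩ := Set.Finite.exists_minimalFor (fun c : Case X => c.1) S hSfin hSne
    exact ⟨m, hmS, fun c hc h => le_antisymm (hmmin hc h) h⟩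
  obtain ⟨hmin, hmo, htm, hmg⟩ := hmS
  -- m attacks t in the old AF
  have hatt : attack (insert dflt D) N1 (Sum.inl m) (Sum.inl t) := by
    refine ⟨by rw [hmo]; exact fun h => ho h.symm, le_of_lt htm, ?_⟩
    rintro ⟨c, hcmem, hcm, htc, hco⟩
    have hcS : c ∈ S := ⟨hcmem, by rw [hco, hmo], htc, le_of_lt (lt_of_lt_of_le hcm hmg)⟩
    exact absurd (hmmin c hcS (le_of_lt hcm)) (ne_of_gt hcm)
  have := hdef (Sum.inl m) (Or.inl ⟨m, hmin, rfl⟩) hatt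
  exact this (le_of_lt (lt_of_le_of_lt hmg hgN))
end

section
/- Every concise subset of a dataset (w.r.t. regular AACBR inference) is coherent: if D' ⊆ D is concise w.r.t. D, then no two cases of D' share a characterisation while having different outcomes. -/
open Classical

/-- An example is surprising w.r.t. `D'` iff without it AACBR predicts a different
outcome for its characterisation. -/
noncomputable def Surprising {X : Type*} [PartialOrder X] (dflt : Case X)
    (D' : Set (Case X)) (e : Case X) : Prop :=
  aacbrOutcome (D' \ {e}) dflt e.1 ≠ e.2

/-- An example is sufficient w.r.t. `D'` iff adding it makes AACBR predict its outcome. -/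
noncomputable def Sufficient {X : Type*} [PartialOrder X] (dflt : Case X)
    (D' : Set (Case X)) (e : Case X) : Prop :=
  aacbrOutcome (insert e D') dflt e.1 = e.2

/-- An example is includable w.r.t. `D'` iff it is both surprising and sufficient. -/
noncomputable def Includable {X : Type*} [PartialOrder X] (dflt : Case X)
    (D' : Set (Case X)) (e : Case X) : Prop :=
  Surprising dflt D' e ∧ Sufficient dflt D' e

/-- `S'` is concise w.r.t. `S` iff `S'` is exactly the set of examples of `S` that are
includable w.r.t. `S'`. -/
noncomputable def Concise {X : Type*} [PartialOrder X] (dflt : Case X)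
    (S' S : Set (Case X)) : Prop :=
  S' = {e ∈ S | Includable dflt S' e}

/-- Every concise subset is coherent: if `D' ⊆ D` is concise w.r.t. `D` (for regular
AACBR inference), then no two cases of `D'` share a characterisation while having
different outcomes. -/
theorem concise_subset_coherent {X : Type*} [PartialOrder X]
    (D : Set (Case X)) (hfin : D.Finite)
    (dflt : Case X) (hd : ∀ x : X, dflt.1 ≤ x)
    (D' : Set (Case X)) (hD' : D' ⊆ D) (hconc : Concise dflt D' D) :
    Coherent D' := by
  intro a ha b hb hab
  have hinc : ∀ e ∈ D', aacbrOutcome D' dflt e.1 = e.2 := by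
    intro e he
    have : e ∈ {e ∈ D | Includable dflt D' e} := hconc ▸ he
    have hsuf := this.2.2
    rwa [Sufficient, Set.insert_eq_self.mpr he] at hsuf
  rw [← hinc a ha, ← hinc b hb, hab]
end

section
/- Define cAACBR inference: D ⊢' (x,y) iff concise(D) ⊢ (x,y), where concise(D) is the unique concise subset of D (assumed to exist for all relevant datasets, with concise(D) = concise(D ∪ {(x,y)}) whenever D ⊢' (x,y) and (x,y) ∉ D). Then ⊢' is cautiously monotonic: if D ⊢' s and D ⊢' t then D ∪ {s} ⊢' t, for atoms s. -/
/-- The cAACBR-style inference: `D ⊢' s` iff `concise D ⊢ s`. -/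
def entails' {X Y : Type*} (C : Set (X × Y) → X → Y)
    (concise : Set (X × Y) → Set (X × Y)) (D : Set (X × Y)) (s : Sent X Y) : Prop :=
  entails C (concise D) s

/-- cAACBR inference is cautiously monotonic: given a `concise` operator on datasets
satisfying `concise (D ∪ {(x,y)}) = concise D` whenever `D ⊢' (x,y)` and `(x,y) ∉ D`,
the relation `D ⊢' s` iff `concise D ⊢ s` satisfies: if `D ⊢' (x,y)` and `D ⊢' s`,
then `D ∪ {(x,y)} ⊢' s`. -/
theorem caacbr_cautiously_monotonic {X Y : Type*}
    (C : Set (X × Y) → X → Y) (concise : Set (X × Y) → Set (X × Y))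
    (hsub : ∀ D : Set (X × Y), concise D ⊆ D)
    (hstab : ∀ (D : Set (X × Y)) (x : X) (y : Y),
      entails' C concise D (.pos x y) → (x, y) ∉ D → concise (D ∪ {(x, y)}) = concise D)
    (D : Set (X × Y)) (x : X) (y : Y) (s : Sent X Y)
    (h1 : entails' C concise D (.pos x y)) (h2 : entails' C concise D s) :
    entails' C concise (D ∪ {(x, y)}) s := by
  by_cases hmem : (x, y) ∈ D
  · have : D ∪ {(x, y)} = D := by simp [Set.union_eq_self_of_subset_right, Set.singleton_subset_iff.mpr hmem]
    rw [this]; exact h2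
  · unfold entails' at *
    rw [hstab D x y h1 hmem]; exact h2
end

section
/- (Removal of spikes) Let (Args, ⤳) be the regular AF mined from D and new case N, and let α ∈ D be a spike, i.e. there is no directed path of attacks from α to the default argument. Then the AACBR-predicted outcome for N given D \ {α} equals the predicted outcome given D. -/
open Classical

/-- A spike: a case of `D` from which there is no directed attack path (within the
arguments of the mined AF) to the default argument. -/
def IsSpike {X : Type*} [PartialOrder X] (D : Set (Case X)) (dflt : Case X) (N : X)
    (a : Case X) : Prop :=
  ¬ Relation.ReflTransGen
      (fun x y => x ∈ minedArgs D dflt ∧ y ∈ minedArgs D dflt ∧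
        attack (insert dflt D) N x y)
      (Sum.inl a) (Sum.inl dflt)

/-- Removal of spikes: if `α ∈ D` is a spike of the regular AF mined from `D` and new
case `N`, then the AACBR-predicted outcome for `N` given `D \ {α}` equals the one
given `D`. -/
theorem spike_removal_preserves_outcome {X : Type*} [PartialOrder X]
    (D : Set (Case X)) (hfin : D.Finite)
    (dflt : Case X) (hd : ∀ x : X, dflt.1 ≤ x) (N : X)
    (a : Case X) (ha : a ∈ D) (hspike : IsSpike D dflt N a) :
    aacbrOutcome (D \ {a}) dflt N = aacbrOutcome D dflt N := by
  classical
  set CB : Set (Case X) := insert dflt D with hCB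
  set CB' : Set (Case X) := insert dflt (D \ {a}) with hCB'
  set Args : Set (Arg X) := minedArgs D dflt with hArgsdef
  set Args' : Set (Arg X) := minedArgs (D \ {a}) dflt with hArgs'def
  set att : Arg X → Arg X → Prop := attack CB N with hattdef
  set att' : Arg X → Arg X → Prop := attack CB' N with hatt'def
  set step : Arg X → Arg X → Prop :=
    fun x y => x ∈ Args ∧ y ∈ Args ∧ att x y with hstepdef
  set R : Set (Arg X) :=
    {y | y ∈ Args ∧ Relation.ReflTransGen step y (Sum.inl dflt)} with hRdef
  have hCBsub : CB' ⊆ CB := by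
    intro g hg
    rcases hg with hg | hg
    · exact Or.inl hg
    · exact Or.inr hg.1
  have hArgssub : Args' ⊆ Args := by
    intro x hx
    rcases hx with ⟨c, hc, rfl⟩ | hx
    · exact Or.inl ⟨c, hCBsub hc, rfl⟩
    · exact Or.inr hx
  -- attacks are monotone under shrinking the blocker set
  have hmono : ∀ x y : Arg X, att x y → att' x y := by
    rintro (b | b) (c | c) h
    · exact ⟨h.1, h.2.1, fun ⟨g, hg, hgl⟩ => h.2.2 ⟨g, hCBsub hg, hgl⟩⟩
    · exact h.elim
    · exact h
    · exact h.elim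
  have hane : Sum.inl a ∉ R := fun h => hspike h.2
  -- key lemma: new attacks on arguments in R are old attacks
  have hkey : ∀ x y : Arg X, y ∈ R → att' x y → att x y := by
    rintro (b | b) (c | c) hcR h
    · refine ⟨h.1, h.2.1, fun hS => ?_⟩
      -- there is a blocker; take a minimal one
      set S : Set (Case X) := {g | g ∈ CB ∧ g.1 < b.1 ∧ c.1 < g.1 ∧ g.2 = b.2} with hSdef
      have hSfin : S.Finite := ((hfin.insert dflt).subset (fun g hg => hg.1))
      have hSne : S.Nonempty := by
        obtain ⟨g, hg, hgl⟩ := hS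
        exact ⟨g, hg, hgl⟩
      obtain ⟨g, hgS, hgmin⟩ := (by
          obtain ⟨g, hg⟩ := hSfin.exists_minimalFor (fun g : Case X => g.1) S hSne
          exact ⟨g, hg.1, fun g' hg' hle => le_antisymm (hg.2 hg' hle) hle⟩ :
          ∃ g ∈ S, ∀ g' ∈ S, g'.1 ≤ g.1 → g.1 = g'.1)
      -- g attacks c in the old AF
      have hgatt : att (Sum.inl g) (Sum.inl c) := by
        refine ⟨by rw [hgS.2.2.2]; exact h.1, le_of_lt hgS.2.2.1, ?_⟩
        rintro ⟨h', hh', hl1, hl2, hl3⟩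
        have : h' ∈ S := ⟨hh', lt_trans hl1 hgS.2.1, hl2, by rw [hl3, hgS.2.2.2]⟩
        exact absurd (hgmin h' this (le_of_lt hl1)) (ne_of_gt hl1)
      have hgArgs : Sum.inl g ∈ Args := Or.inl ⟨g, hgS.1, rfl⟩
      have hgR : Sum.inl g ∈ R :=
        ⟨hgArgs, Relation.ReflTransGen.head ⟨hgArgs, hcR.1, hgatt⟩ hcR.2⟩
      have hgne : g ≠ a := fun he => hane (he ▸ hgR)
      have hgCB' : g ∈ CB' := by
        rcases hgS.1 with hg | hg
        · exact Or.inl hg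
        · exact Or.inr ⟨hg, hgne⟩
      exact h.2.2 ⟨g, hgCB', hgS.2.1, hgS.2.2.1, hgS.2.2.2⟩
    · exact h.elim
    · exact h
    · exact h.elim
  -- membership in R implies membership in Args'
  have hRArgs' : ∀ y ∈ R, y ∈ Args' := by
    rintro y ⟨hy, hpath⟩
    rcases hy with ⟨c, hc, rfl⟩ | hy
    · rcases hc with hc | hc
      · exact Or.inl ⟨c, Or.inl hc, rfl⟩
      · have hca : c ≠ a := fun he => hane (he ▸ ⟨Or.inl ⟨c, Or.inr hc, rfl⟩, hpath⟩)
        exact Or.inl ⟨c, Or.inr ⟨hc, hca⟩, rfl⟩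
    · exact Or.inr hy
  -- R is closed under old-attackers
  have hRclosed : ∀ x y : Arg X, x ∈ Args → y ∈ R → att x y → x ∈ R := by
    intro x y hx hy hatt
    exact ⟨hx, Relation.ReflTransGen.head ⟨hx, hy.1, hatt⟩ hy.2⟩
  have hGsub : ∀ i, Gseq Args att i ⊆ Args := by
    intro i
    cases i with
    | zero => exact fun x hx => hx.1
    | succ i => exact fun x hx => hx.1
  have hGsub' : ∀ i, Gseq Args' att' i ⊆ Args' := by
    intro i
    cases i with
    | zero => exact fun x hx => hx.1
    | succ i => exact fun x hx => hx.1
  -- equivalence of approximation sequences on R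
  have hGseq : ∀ i, ∀ y ∈ R, (y ∈ Gseq Args att i ↔ y ∈ Gseq Args' att' i) := by
    intro i
    induction i with
    | zero =>
      intro y hyR
      constructor
      · rintro ⟨hy, hno⟩
        exact ⟨hRArgs' y hyR, fun b hb hatt' =>
          hno b (hArgssub hb) (hkey b y hyR hatt')⟩
      · rintro ⟨hy, hno⟩
        exact ⟨hyR.1, fun b hbA hatt =>
          hno b (hRArgs' b (hRclosed b y hbA hyR hatt)) (hmono b y hatt)⟩
    | succ i ih =>
      intro y hyR
      constructor
      · rintro ⟨hy, hdef⟩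
        refine ⟨hRArgs' y hyR, fun b hb hatt' => ?_⟩
        have hbA : b ∈ Args := hArgssub hb
        have hattb : att b y := hkey b y hyR hatt'
        have hbR : b ∈ R := hRclosed b y hbA hyR hattb
        obtain ⟨c, hc, hcatt⟩ := hdef b hbA hattb
        have hcR : c ∈ R := hRclosed c b (hGsub i hc) hbR hcatt
        exact ⟨c, (ih c hcR).mp hc, hmono c b hcatt⟩
      · rintro ⟨hy, hdef⟩
        refine ⟨hyR.1, fun b hb hatt => ?_⟩
        have hbR : b ∈ R := hRclosed b y hb hyR hatt
        obtain ⟨c, hc, hcatt'⟩ := hdef b (hRArgs' b hbR) (hmono b y hatt)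
        have hcatt : att c b := hkey c b hbR hcatt'
        have hcR : c ∈ R := hRclosed c b (hArgssub (hGsub' i hc)) hbR hcatt
        exact ⟨c, (ih c hcR).mpr hc, hcatt⟩
  -- the default is in R
  have hdfltR : Sum.inl dflt ∈ R :=
    ⟨Or.inl ⟨dflt, Or.inl rfl, rfl⟩, Relation.ReflTransGen.refl⟩
  have hmain : (Sum.inl dflt ∈ minedGrounded (D \ {a}) dflt N) ↔
      (Sum.inl dflt ∈ minedGrounded D dflt N) := by
    simp only [minedGrounded, grounded, Set.mem_iUnion]
    constructor
    · rintro ⟨i, hi⟩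
      exact ⟨i, (hGseq i _ hdfltR).mpr hi⟩
    · rintro ⟨i, hi⟩
      exact ⟨i, (hGseq i _ hdfltR).mp hi⟩
  unfold aacbrOutcome
  by_cases h : Sum.inl dflt ∈ minedGrounded D dflt N
  · rw [if_pos (hmain.mpr h), if_pos h]
  · rw [if_neg (fun h' => h (hmain.mp h')), if_neg h]
end

section
/- In a finite abstract argumentation framework, whether the default argument belongs to the grounded extension depends only on the arguments from which there is a directed attack path to the default argument: if two AFs agree on the set of arguments with a path to the default and on all attacks among those arguments, then the default is in the grounded extension of one iff it is in the grounded extension of the other. -/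
/-- The set of arguments of the AF from which there is a directed attack path
(possibly empty) to `d`, all of whose members are arguments of the AF. -/
def reachSet {A : Type*} (Args : Set A) (att : A → A → Prop) (d : A) : Set A :=
  {a | a ∈ Args ∧
    Relation.ReflTransGen (fun x y => x ∈ Args ∧ y ∈ Args ∧ att x y) a d}

lemma Gseq_subset_args {A : Type*} {Args : Set A} {att : A → A → Prop} :
    ∀ i, Gseq Args att i ⊆ Args
  | 0 => fun _ ha => ha.1
  | (_ + 1) => fun _ ha => ha.1

/-- Whether the default argument `d` belongs to the grounded extension depends only on
the arguments with a directed attack path to `d` and the attacks among them. -/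
theorem grounded_default_depends_on_reach {A : Type*} [Finite A]
    (Args1 Args2 : Set A) (att1 att2 : A → A → Prop) (d : A)
    (hreach : reachSet Args1 att1 d = reachSet Args2 att2 d)
    (hatt : ∀ a ∈ reachSet Args1 att1 d, ∀ b ∈ reachSet Args1 att1 d,
      (att1 a b ↔ att2 a b)) :
    (d ∈ grounded Args1 att1 ↔ d ∈ grounded Args2 att2) := by
  have hsub1 : reachSet Args1 att1 d ⊆ Args1 := fun a ha => ha.1
  have hsub2 : reachSet Args1 att1 d ⊆ Args2 := by
    intro a ha
    rw [hreach] at ha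
    exact ha.1
  have hcl1 : ∀ b ∈ reachSet Args1 att1 d, ∀ c ∈ Args1, att1 c b →
      c ∈ reachSet Args1 att1 d := by
    rintro b ⟨hb1, hpath⟩ c hc h
    exact ⟨hc, Relation.ReflTransGen.head ⟨hc, hb1, h⟩ hpath⟩
  have hcl2 : ∀ b ∈ reachSet Args1 att1 d, ∀ c ∈ Args2, att2 c b →
      c ∈ reachSet Args1 att1 d := by
    intro b hb c hc h
    rw [hreach] at hb ⊢
    obtain ⟨hb2, hpath⟩ := hb
    exact ⟨hc, Relation.ReflTransGen.head ⟨hc, hb2, h⟩ hpath⟩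
  have key : ∀ i, ∀ a ∈ reachSet Args1 att1 d,
      (a ∈ Gseq Args1 att1 i ↔ a ∈ Gseq Args2 att2 i) := by
    intro i
    induction i with
    | zero =>
      intro a ha
      constructor
      · rintro ⟨_, hno⟩
        refine ⟨hsub2 ha, fun b hb2 hb2a => ?_⟩
        have hbR := hcl2 a ha b hb2 hb2a
        exact hno b (hsub1 hbR) ((hatt b hbR a ha).mpr hb2a)
      · rintro ⟨_, hno⟩
        refine ⟨hsub1 ha, fun b hb1 hb1a => ?_⟩
        have hbR := hcl1 a ha b hb1 hb1a
        exact hno b (hsub2 hbR) ((hatt b hbR a ha).mp hb1a)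
    | succ i ih =>
      intro a ha
      constructor
      · rintro ⟨_, hdef⟩
        refine ⟨hsub2 ha, fun b hb2 hb2a => ?_⟩
        have hbR := hcl2 a ha b hb2 hb2a
        obtain ⟨c, hc, hcb⟩ := hdef b (hsub1 hbR) ((hatt b hbR a ha).mpr hb2a)
        have hcR := hcl1 b hbR c (Gseq_subset_args i hc) hcb
        exact ⟨c, (ih c hcR).mp hc, (hatt c hcR b hbR).mp hcb⟩
      · rintro ⟨_, hdef⟩
        refine ⟨hsub1 ha, fun b hb1 hb1a => ?_⟩
        have hbR := hcl1 a ha b hb1 hb1a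
        obtain ⟨c, hc, hcb⟩ := hdef b (hsub2 hbR) ((hatt b hbR a ha).mp hb1a)
        have hcR := hcl2 b hbR c (Gseq_subset_args i hc) hcb
        exact ⟨c, (ih c hcR).mpr hc, (hatt c hcR b hbR).mpr hcb⟩
  have hd1 : d ∈ Args1 → d ∈ reachSet Args1 att1 d :=
    fun h => ⟨h, Relation.ReflTransGen.refl⟩
  have hd2 : d ∈ Args2 → d ∈ reachSet Args1 att1 d := by
    intro h
    rw [hreach]
    exact ⟨h, Relation.ReflTransGen.refl⟩
  simp only [grounded, Set.mem_iUnion]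
  constructor
  · rintro ⟨i, hi⟩
    exact ⟨i, (key i d (hd1 (Gseq_subset_args i hi))).mp hi⟩
  · rintro ⟨i, hi⟩
    exact ⟨i, (key i d (hd2 (Gseq_subset_args i hi))).mpr hi⟩
end
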